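/- Asynchronous incremental voting on K_n, elimination of an extreme opinion: let s = min_v X_v(0) and ℓ = max_v X_v(0) and suppose ℓ ≥ s+3. Then for every t ≥ 0, E[N_s(t+1)·N_ℓ(t+1) | X(t)] ≤ (1 − 1/n)·N_s(t)·N_ℓ(t), and consequently, for T = ⌈3n log n⌉, P[N_s(T)·N_ℓ(T) > 0] ≤ 1/n; that is, with probability at least 1 − 1/n one of the two extreme opinions has disappeared within ⌈3n log n⌉ steps. -/

import Mathlib

/-!
STATEMENT 14: Asynchronous incremental voting on `K_n`, elimination of an extreme
opinion.  Let `s = min_v X_v(0)` and `ℓ = max_v X_v(0)` with `ℓ ≥ s+3`.  Then for every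
`t ≥ 0`, `E[N_s(t+1)·N_ℓ(t+1) | X(t)] ≤ (1 − 1/n)·N_s(t)·N_ℓ(t)` and, for
`T = ⌈3 n log n⌉`, `P[N_s(T)·N_ℓ(T) > 0] ≤ 1/n`; that is, with probability at least
`1 − 1/n` one of the two extreme opinions has disappeared within `⌈3 n log n⌉` steps.

On `K_n` the asynchronous process is: a uniformly random vertex `v` is chosen, then a
second uniformly random vertex `w`, and `v` updates towards `w`'s opinion.  The one-step
conditional expectation bound is stated for every configuration whose opinions lie in
`[s, ℓ]` (which holds for every state of the process).
-/

namespace KnAsync14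

/-- The incremental voting update rule. -/
def updateRule (a b : ℤ) : ℤ := if a < b then a + 1 else if b < a then a - 1 else a

/-- Expected value of a real-valued function under a probability mass function. -/
noncomputable def expVal {α : Type*} (p : PMF α) (f : α → ℝ) : ℝ :=
  ∑' a, (p a).toReal * f a

/-- The probability of an event under a probability mass function, as a real number. -/
noncomputable def prob {α : Type*} (p : PMF α) (A : Set α) : ℝ :=
  (∑' a, A.indicator p a).toReal

/-- One step of asynchronous incremental voting on `K_n`: a uniformly random pair
`(v, w)` is chosen and vertex `v` updates using `w`'s opinion. -/
noncomputable def step (n : ℕ) [NeZero n] (x : Fin n → ℤ) : PMF (Fin n → ℤ) :=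
  (PMF.uniformOfFintype (Fin n × Fin n)).map
    fun p => Function.update x p.1 (updateRule (x p.1) (x p.2))

/-- The distribution of the configuration after `t` steps, started from `x0`. -/
noncomputable def dist (n : ℕ) [NeZero n] (x0 : Fin n → ℤ) : ℕ → PMF (Fin n → ℤ)
  | 0 => PMF.pure x0
  | t + 1 => (dist n x0 t).bind (step n)

/-- `count n i x` is `N_i`: the number of vertices holding opinion `i`. -/
def count (n : ℕ) (i : ℤ) (x : Fin n → ℤ) : ℕ :=
  (Finset.univ.filter fun v => x v = i).card


lemma count_cast (n : ℕ) (i : ℤ) (x : Fin n → ℤ) :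
    (count n i x : ℤ) = ∑ v, (if x v = i then (1:ℤ) else 0) := by
  rw [count, Finset.card_filter]; push_cast; rfl

lemma count_update (n : ℕ) (x : Fin n → ℤ) (v : Fin n) (c i : ℤ) :
    (count n i (Function.update x v c) : ℤ) =
      count n i x + (if c = i then 1 else 0) - (if x v = i then 1 else 0) := by
  rw [count_cast, count_cast]
  have h : ∀ u, (if Function.update x v c u = i then (1:ℤ) else 0)
      = Function.update (fun u => if x u = i then (1:ℤ) else 0) v (if c = i then 1 else 0) u := by
    intro u
    by_cases h : u = v <;> simp [h, Function.update]
  rw [Finset.sum_congr rfl (fun u _ => h u),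
    Finset.sum_update_of_mem (Finset.mem_univ v)]
  have := Finset.sum_eq_sum_sdiff_singleton_add (Finset.mem_univ v)
      (fun u => if x u = i then (1:ℤ) else 0)
  omega

lemma updateRule_eq_min {s : ℤ} (a b : ℤ) (ha : s ≤ a) (hb : s ≤ b) :
    updateRule a b = s ↔ b = s ∧ (a = s ∨ a = s + 1) := by
  unfold updateRule; split_ifs <;> omega

lemma updateRule_eq_max {ℓ : ℤ} (a b : ℤ) (ha : a ≤ ℓ) (hb : b ≤ ℓ) :
    updateRule a b = ℓ ↔ b = ℓ ∧ (a = ℓ ∨ a = ℓ - 1) := by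
  unfold updateRule; split_ifs <;> omega

lemma four_counts_le (n : ℕ) (x : Fin n → ℤ) {s ℓ : ℤ} (h3 : s + 3 ≤ ℓ) :
    (count n s x : ℤ) + count n (s+1) x + count n (ℓ-1) x + count n ℓ x ≤ n := by
  rw [count_cast, count_cast, count_cast, count_cast, ← Finset.sum_add_distrib,
    ← Finset.sum_add_distrib, ← Finset.sum_add_distrib]
  calc _ ≤ ∑ _v : Fin n, (1:ℤ) := by
        apply Finset.sum_le_sum
        intro v _
        split_ifs <;> omega
    _ = n := by simp


lemma sum_pairs_bound (n : ℕ) (x : Fin n → ℤ) {s ℓ : ℤ}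
    (hval : ∀ v, s ≤ x v ∧ x v ≤ ℓ) (h3 : s + 3 ≤ ℓ) :
    ∑ p : Fin n × Fin n,
        ((count n s (Function.update x p.1 (updateRule (x p.1) (x p.2))) : ℤ) *
         (count n ℓ (Function.update x p.1 (updateRule (x p.1) (x p.2))))) ≤
      ((n:ℤ) * n - n) * ((count n s x : ℤ) * (count n ℓ x : ℤ)) := by
  set a : ℤ := (count n s x : ℤ) with ha
  set b : ℤ := (count n ℓ x : ℤ) with hb
  set A : ℤ := (count n (s+1) x : ℤ) with hA
  set B : ℤ := (count n (ℓ-1) x : ℤ) with hB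
  have key : ∀ v w : Fin n,
      (count n s (Function.update x v (updateRule (x v) (x w))) : ℤ) *
        (count n ℓ (Function.update x v (updateRule (x v) (x w)))) =
      a * b
        + a * (if x w = ℓ ∧ (x v = ℓ ∨ x v = ℓ - 1) then (1:ℤ) else 0)
        - a * (if x v = ℓ then 1 else 0)
        + b * (if x w = s ∧ (x v = s ∨ x v = s + 1) then (1:ℤ) else 0)
        - b * (if x v = s then 1 else 0) := by
    intro v w
    rw [count_update, count_update,
      if_congr (updateRule_eq_min (x v) (x w) (hval v).1 (hval w).1) rfl rfl,
      if_congr (updateRule_eq_max (x v) (x w) (hval v).2 (hval w).2) rfl rfl]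
    have h1 := (hval v).1; have h2 := (hval v).2
    split_ifs <;> first | ring1 | (exfalso; omega)
  have inner_s : ∀ v : Fin n,
      ∑ w, (if x w = s ∧ (x v = s ∨ x v = s + 1) then (1:ℤ) else 0)
        = (if x v = s ∨ x v = s + 1 then a else 0) := by
    intro v
    by_cases hP : x v = s ∨ x v = s + 1
    · simp only [hP, and_true, if_pos]; rw [ha, count_cast]
    · simp [hP]
  have inner_l : ∀ v : Fin n,
      ∑ w, (if x w = ℓ ∧ (x v = ℓ ∨ x v = ℓ - 1) then (1:ℤ) else 0)
        = (if x v = ℓ ∨ x v = ℓ - 1 then b else 0) := by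
    intro v
    by_cases hP : x v = ℓ ∨ x v = ℓ - 1
    · simp only [hP, and_true, if_pos]; rw [hb, count_cast]
    · simp [hP]
  have hPc : ∑ v, (if x v = s ∨ x v = s + 1 then (1:ℤ) else 0) = a + A := by
    rw [ha, hA, count_cast, count_cast, ← Finset.sum_add_distrib]
    refine Finset.sum_congr rfl fun v _ => ?_
    split_ifs <;> omega
  have hQc : ∑ v, (if x v = ℓ ∨ x v = ℓ - 1 then (1:ℤ) else 0) = b + B := by
    rw [hb, hB, count_cast, count_cast, ← Finset.sum_add_distrib]
    refine Finset.sum_congr rfl fun v _ => ?_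
    split_ifs <;> omega
  have step1 : ∀ v : Fin n,
      ∑ w, ((count n s (Function.update x v (updateRule (x v) (x w))) : ℤ) *
         (count n ℓ (Function.update x v (updateRule (x v) (x w))))) =
      (n:ℤ) * (a * b)
        + a * (if x v = ℓ ∨ x v = ℓ - 1 then b else 0)
        - (n:ℤ) * (a * (if x v = ℓ then 1 else 0))
        + b * (if x v = s ∨ x v = s + 1 then a else 0)
        - (n:ℤ) * (b * (if x v = s then 1 else 0)) := by
    intro v
    rw [Finset.sum_congr rfl (fun w _ => key v w)]
    simp only [Finset.sum_sub_distrib, Finset.sum_add_distrib, ← Finset.mul_sum,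
      inner_s v, inner_l v, Finset.sum_const, Finset.card_univ, Fintype.card_fin,
      nsmul_eq_mul, Finset.sum_ite_eq]
    ring
  rw [Fintype.sum_prod_type, Finset.sum_congr rfl (fun v _ => step1 v)]
  have e1 : ∑ v, (if x v = ℓ ∨ x v = ℓ - 1 then b else 0) = (b + B) * b := by
    have h : ∀ v : Fin n, (if x v = ℓ ∨ x v = ℓ - 1 then b else 0)
        = (if x v = ℓ ∨ x v = ℓ - 1 then (1:ℤ) else 0) * b := by
      intro v; split_ifs <;> ring
    rw [Finset.sum_congr rfl (fun v _ => h v), ← Finset.sum_mul, hQc]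
  have e2 : ∑ v, (if x v = s ∨ x v = s + 1 then a else 0) = (a + A) * a := by
    have h : ∀ v : Fin n, (if x v = s ∨ x v = s + 1 then a else 0)
        = (if x v = s ∨ x v = s + 1 then (1:ℤ) else 0) * a := by
      intro v; split_ifs <;> ring
    rw [Finset.sum_congr rfl (fun v _ => h v), ← Finset.sum_mul, hPc]
  have e3 : ∑ v, (a * (if x v = ℓ then (1:ℤ) else 0)) = a * b := by
    rw [← Finset.mul_sum, hb, count_cast]
  have e4 : ∑ v, (b * (if x v = s then (1:ℤ) else 0)) = b * a := by
    rw [← Finset.mul_sum, ha, count_cast]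
  have etotal : ∑ v : Fin n,
      ((n:ℤ) * (a * b)
        + a * (if x v = ℓ ∨ x v = ℓ - 1 then b else 0)
        - (n:ℤ) * (a * (if x v = ℓ then 1 else 0))
        + b * (if x v = s ∨ x v = s + 1 then a else 0)
        - (n:ℤ) * (b * (if x v = s then 1 else 0))) =
      (n:ℤ) * ((n:ℤ) * (a * b)) + a * ((b + B) * b) - (n:ℤ) * (a * b)
        + b * ((a + A) * a) - (n:ℤ) * (b * a) := by
    simp only [Finset.sum_sub_distrib, Finset.sum_add_distrib, ← Finset.mul_sum,
      e1, e2, e3, e4, Finset.sum_const, Finset.card_univ, Fintype.card_fin, nsmul_eq_mul]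
    ring
  rw [etotal]
  have hfour := four_counts_le n x h3
  have ha0 : 0 ≤ a := Int.natCast_nonneg _
  have hb0 : 0 ≤ b := Int.natCast_nonneg _
  have hA0 : 0 ≤ A := Int.natCast_nonneg _
  have hB0 : 0 ≤ B := Int.natCast_nonneg _
  nlinarith [mul_nonneg ha0 hb0, mul_nonneg (mul_nonneg ha0 hb0) hA0,
    mul_nonneg (mul_nonneg ha0 hb0) hB0,
    mul_nonneg (mul_nonneg ha0 hb0) (add_nonneg ha0 hb0)]

open scoped ENNReal


lemma updateRule_mem' {s ℓ : ℤ} (a b : ℤ) (ha : s ≤ a ∧ a ≤ ℓ) (hb : s ≤ b ∧ b ≤ ℓ) :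
    s ≤ updateRule a b ∧ updateRule a b ≤ ℓ := by
  unfold updateRule; split_ifs <;> omega

lemma tsum_map_mul {α β : Type*} (p : PMF α) (g : α → β) (F : β → ℝ≥0∞) :
    ∑' b, (p.map g) b * F b = ∑' a, p a * F (g a) := by
  classical
  simp only [PMF.map_apply]
  calc ∑' b, (∑' a, if b = g a then p a else 0) * F b
      = ∑' b, ∑' a, (if b = g a then p a else 0) * F b := by
        exact tsum_congr fun b => ENNReal.tsum_mul_right.symm
    _ = ∑' a, ∑' b, (if b = g a then p a else 0) * F b := ENNReal.tsum_comm
    _ = ∑' a, p a * F (g a) := by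
        refine tsum_congr fun a => ?_
        rw [tsum_eq_single (g a) (fun b hb => by simp [hb])]
        simp

lemma bind_tsum {α : Type*} (p : PMF α) (q : α → PMF α) (F : α → ℝ≥0∞) :
    ∑' y, (p.bind q) y * F y = ∑' x, p x * ∑' y, q x y * F y := by
  simp only [PMF.bind_apply]
  calc ∑' y, (∑' x, p x * q x y) * F y
      = ∑' y, ∑' x, p x * q x y * F y := tsum_congr fun y => ENNReal.tsum_mul_right.symm
    _ = ∑' x, ∑' y, p x * q x y * F y := ENNReal.tsum_comm
    _ = ∑' x, p x * ∑' y, q x y * F y := by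
        refine tsum_congr fun x => ?_
        simp only [mul_assoc]
        exact ENNReal.tsum_mul_left

lemma step_valid {n : ℕ} [NeZero n] {x y : Fin n → ℤ} {s ℓ : ℤ}
    (hval : ∀ v, s ≤ x v ∧ x v ≤ ℓ) (hy : y ∈ (step n x).support) :
    ∀ v, s ≤ y v ∧ y v ≤ ℓ := by
  rw [step, PMF.support_map] at hy
  obtain ⟨p, -, rfl⟩ := hy
  intro v
  dsimp only
  rw [Function.update_apply]
  split_ifs
  · exact updateRule_mem' _ _ (hval _) (hval _)
  · exact hval v

lemma dist_valid {n : ℕ} [NeZero n] {x0 : Fin n → ℤ} {s ℓ : ℤ}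
    (h0 : ∀ v, s ≤ x0 v ∧ x0 v ≤ ℓ) :
    ∀ t, ∀ y ∈ (dist n x0 t).support, ∀ v, s ≤ y v ∧ y v ≤ ℓ := by
  intro t
  induction t with
  | zero =>
      intro y hy
      rw [dist, PMF.support_pure, Set.mem_singleton_iff] at hy
      subst hy; exact h0
  | succ t ih =>
      intro y hy
      rw [dist, PMF.support_bind] at hy
      simp only [Set.mem_iUnion] at hy
      obtain ⟨x, hx, hy⟩ := hy
      exact step_valid (ih x hx) hy

/-- the weight function -/
noncomputable def Fw (n : ℕ) (s ℓ : ℤ) (y : Fin n → ℤ) : ℝ≥0∞ :=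
  ((count n s y * count n ℓ y : ℕ) : ℝ≥0∞)

lemma Fw_ne_top {n : ℕ} {s ℓ : ℤ} {y : Fin n → ℤ} : Fw n s ℓ y ≠ ∞ := by
  simp only [Fw]; exact ENNReal.natCast_ne_top _

lemma step_exp_eq (n : ℕ) [NeZero n] (x : Fin n → ℤ) (F : (Fin n → ℤ) → ℝ≥0∞) :
    ∑' y, step n x y * F y =
      ((n : ℝ≥0∞) * n)⁻¹ *
        ∑ p : Fin n × Fin n, F (Function.update x p.1 (updateRule (x p.1) (x p.2))) := by
  rw [step, tsum_map_mul, tsum_fintype]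
  simp only [PMF.uniformOfFintype_apply, Fintype.card_prod, Fintype.card_fin]
  rw [← Finset.mul_sum]
  push_cast
  ring

lemma step_exp_le (n : ℕ) [NeZero n] (x : Fin n → ℤ) {s ℓ : ℤ}
    (hval : ∀ v, s ≤ x v ∧ x v ≤ ℓ) (h3 : s + 3 ≤ ℓ) :
    ∑' y, step n x y * Fw n s ℓ y ≤ ((n - 1 : ℕ) : ℝ≥0∞) * ((n : ℝ≥0∞))⁻¹ * Fw n s ℓ x := by
  have hn0 : (n : ℝ≥0∞) ≠ 0 := by
    exact_mod_cast Nat.cast_ne_zero.mpr (NeZero.ne n)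
  have hntop : (n : ℝ≥0∞) ≠ ∞ := ENNReal.natCast_ne_top n
  rw [step_exp_eq]
  -- cast the integer bound to ℕ then ℝ≥0∞
  have hZ := sum_pairs_bound n x hval h3
  have hnat : ∑ p : Fin n × Fin n,
      (count n s (Function.update x p.1 (updateRule (x p.1) (x p.2))) *
       count n ℓ (Function.update x p.1 (updateRule (x p.1) (x p.2)))) ≤
      (n - 1) * n * (count n s x * count n ℓ x) := by
    have hle : (n : ℤ) ≤ (n : ℤ) * n := by nlinarith [Int.natCast_nonneg n]
    zify [Nat.one_le_iff_ne_zero.mpr (NeZero.ne n)]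
    calc (∑ p : Fin n × Fin n,
        ((count n s (Function.update x p.1 (updateRule (x p.1) (x p.2))) : ℤ) *
         (count n ℓ (Function.update x p.1 (updateRule (x p.1) (x p.2)))))) ≤ _ := hZ
      _ = ((n : ℤ) - 1) * n * ((count n s x : ℤ) * (count n ℓ x : ℤ)) := by ring
  have hcast : ∑ p : Fin n × Fin n,
      Fw n s ℓ (Function.update x p.1 (updateRule (x p.1) (x p.2))) ≤
      (((n - 1) * n * (count n s x * count n ℓ x) : ℕ) : ℝ≥0∞) := by
    have hrfl : ∑ p : Fin n × Fin n,
        Fw n s ℓ (Function.update x p.1 (updateRule (x p.1) (x p.2))) =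
        ∑ p : Fin n × Fin n,
          ((count n s (Function.update x p.1 (updateRule (x p.1) (x p.2))) *
           count n ℓ (Function.update x p.1 (updateRule (x p.1) (x p.2))) : ℕ) : ℝ≥0∞) := rfl
    rw [hrfl, ← Nat.cast_sum]
    exact_mod_cast hnat
  calc ((n : ℝ≥0∞) * n)⁻¹ *
        ∑ p : Fin n × Fin n, Fw n s ℓ (Function.update x p.1 (updateRule (x p.1) (x p.2)))
      ≤ ((n : ℝ≥0∞) * n)⁻¹ * (((n - 1) * n * (count n s x * count n ℓ x) : ℕ) : ℝ≥0∞) :=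
        mul_le_mul_right hcast _
    _ = ((n - 1 : ℕ) : ℝ≥0∞) * ((n : ℝ≥0∞))⁻¹ * Fw n s ℓ x := by
        push_cast
        rw [ENNReal.mul_inv (Or.inl hn0) (Or.inl hntop)]
        rw [show ((n : ℝ≥0∞))⁻¹ * (n : ℝ≥0∞)⁻¹ *
            (((n : ℝ≥0∞) - 1) * n * ((count n s x : ℝ≥0∞) * (count n ℓ x : ℝ≥0∞))) =
            ((n : ℝ≥0∞)⁻¹ * n) * (((n : ℝ≥0∞) - 1) * (n : ℝ≥0∞)⁻¹ *
              ((count n s x : ℝ≥0∞) * (count n ℓ x : ℝ≥0∞))) by ring]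
        rw [ENNReal.inv_mul_cancel hn0 hntop, one_mul, Fw]
        push_cast
        ring

lemma dist_exp_le (n : ℕ) [NeZero n] (x0 : Fin n → ℤ) {s ℓ : ℤ}
    (h0 : ∀ v, s ≤ x0 v ∧ x0 v ≤ ℓ) (h3 : s + 3 ≤ ℓ) (t : ℕ) :
    ∑' y, dist n x0 t y * Fw n s ℓ y ≤
      (((n - 1 : ℕ) : ℝ≥0∞) * ((n : ℝ≥0∞))⁻¹) ^ t * Fw n s ℓ x0 := by
  induction t with
  | zero =>
      rw [dist]
      rw [tsum_eq_single x0 (fun y hy => by simp [PMF.pure_apply, hy])]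
      simp
  | succ t ih =>
      rw [dist, bind_tsum]
      calc ∑' x, dist n x0 t x * ∑' y, step n x y * Fw n s ℓ y
          ≤ ∑' x, dist n x0 t x *
              (((n - 1 : ℕ) : ℝ≥0∞) * ((n : ℝ≥0∞))⁻¹ * Fw n s ℓ x) := by
            refine ENNReal.tsum_le_tsum fun x => ?_
            by_cases hx : x ∈ (dist n x0 t).support
            · exact mul_le_mul_right (step_exp_le n x (dist_valid h0 t x hx) h3) _
            · have hz : dist n x0 t x = 0 := by
                simpa [PMF.mem_support_iff] using hx
              simp [hz]
        _ = ((n - 1 : ℕ) : ℝ≥0∞) * ((n : ℝ≥0∞))⁻¹ *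
              ∑' x, dist n x0 t x * Fw n s ℓ x := by
            rw [← ENNReal.tsum_mul_left]
            exact tsum_congr fun x => by ring
        _ ≤ ((n - 1 : ℕ) : ℝ≥0∞) * ((n : ℝ≥0∞))⁻¹ *
              ((((n - 1 : ℕ) : ℝ≥0∞) * ((n : ℝ≥0∞))⁻¹) ^ t * Fw n s ℓ x0) :=
            mul_le_mul_right ih _
        _ = (((n - 1 : ℕ) : ℝ≥0∞) * ((n : ℝ≥0∞))⁻¹) ^ (t + 1) * Fw n s ℓ x0 := by
            rw [pow_succ]; ring

lemma count_le (n : ℕ) (i : ℤ) (x : Fin n → ℤ) : count n i x ≤ n := by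
  simpa [count] using (Finset.card_filter_le Finset.univ fun v => x v = i)

lemma Fw_toReal {n : ℕ} {s ℓ : ℤ} {x : Fin n → ℤ} :
    (Fw n s ℓ x).toReal = (count n s x : ℝ) * (count n ℓ x : ℝ) := by
  simp only [Fw, ENNReal.toReal_natCast]
  push_cast
  ring

lemma real_tail (n : ℕ) (hn : 2 ≤ n) :
    (1 - 1/(n:ℝ))^(⌈3 * (n:ℝ) * Real.log n⌉₊) * ((n:ℝ) * n) ≤ 1/n := by
  have hn0 : (0:ℝ) < n := by positivity
  have hL : (0:ℝ) ≤ Real.log n := Real.log_nonneg (by exact_mod_cast hn.trans' (by norm_num))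
  set T : ℕ := ⌈3 * (n:ℝ) * Real.log n⌉₊ with hT
  have hr0 : (0:ℝ) ≤ 1 - 1/n := by
    rw [sub_nonneg, div_le_one hn0]
    exact_mod_cast Nat.one_le_of_lt hn
  have hre : 1 - 1/(n:ℝ) ≤ Real.exp (-(1/n)) := by
    have := Real.add_one_le_exp (-(1/(n:ℝ)))
    linarith
  have h1 : (1 - 1/(n:ℝ))^T ≤ Real.exp (-(1/n)) ^ T := pow_le_pow_left₀ hr0 hre T
  have h2 : Real.exp (-(1/(n:ℝ))) ^ T = Real.exp (T * (-(1/n))) := (Real.exp_nat_mul _ T).symm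
  have hTc : 3 * (n:ℝ) * Real.log n ≤ T := Nat.le_ceil _
  have h3 : Real.exp ((T:ℝ) * (-(1/n))) ≤ Real.exp (-(3 * Real.log n)) := by
    apply Real.exp_le_exp.mpr
    rw [mul_neg, neg_le_neg_iff, mul_one_div, le_div_iff₀ hn0]
    calc 3 * Real.log n * n = 3 * (n:ℝ) * Real.log n := by ring
      _ ≤ T := hTc
  have h4 : Real.exp (-(3 * Real.log ↑n)) = (1/(n:ℝ))^3 := by
    have h5 : -(3 * Real.log (n:ℝ)) = (3:ℕ) * (-Real.log n) := by push_cast; ring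
    rw [h5, Real.exp_nat_mul, Real.exp_neg, Real.exp_log hn0]
    norm_num
  have hfinal : (1 - 1/(n:ℝ))^T ≤ (1/(n:ℝ))^3 := by
    calc (1 - 1/(n:ℝ))^T ≤ Real.exp (-(1/n)) ^ T := h1
      _ = Real.exp ((T:ℝ) * (-(1/n))) := h2
      _ ≤ Real.exp (-(3 * Real.log n)) := h3
      _ = (1/(n:ℝ))^3 := h4
  calc (1 - 1/(n:ℝ))^T * ((n:ℝ) * n) ≤ (1/(n:ℝ))^3 * ((n:ℝ) * n) := by
        apply mul_le_mul_of_nonneg_right hfinal (by positivity)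
    _ = 1/n := by field_simp

/-- **Elimination of an extreme opinion for asynchronous incremental voting on `K_n`**:
if `ℓ ≥ s + 3`, then `E[N_s(t+1)·N_ℓ(t+1) | X(t)] ≤ (1 − 1/n)·N_s(t)·N_ℓ(t)`, and for
`T = ⌈3 n log n⌉` we have `P[N_s(T)·N_ℓ(T) > 0] ≤ 1/n`. -/
theorem extreme_opinion_elimination_async
    (n : ℕ) [NeZero n] (x0 : Fin n → ℤ) (s ℓ : ℤ)
    (hs : IsLeast (Set.range x0) s) (hℓ : IsGreatest (Set.range x0) ℓ)
    (h3 : s + 3 ≤ ℓ) :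
    (∀ x : Fin n → ℤ, (∀ v, s ≤ x v ∧ x v ≤ ℓ) →
      expVal (step n x) (fun y => (count n s y : ℝ) * (count n ℓ y : ℝ)) ≤
        (1 - 1 / (n : ℝ)) * ((count n s x : ℝ) * (count n ℓ x : ℝ))) ∧
    prob (dist n x0 ⌈3 * n * Real.log n⌉₊) {y | 0 < count n s y * count n ℓ y} ≤
      1 / n := by
  have hn1 : 1 ≤ n := Nat.one_le_iff_ne_zero.mpr (NeZero.ne n)
  have hn0 : (n : ℝ≥0∞) ≠ 0 := Nat.cast_ne_zero.mpr (NeZero.ne n)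
  have hntop : (n : ℝ≥0∞) ≠ ∞ := ENNReal.natCast_ne_top n
  have hnR : (0:ℝ) < n := by exact_mod_cast Nat.pos_of_ne_zero (NeZero.ne n)
  set c : ℝ≥0∞ := ((n - 1 : ℕ) : ℝ≥0∞) * ((n : ℝ≥0∞))⁻¹ with hc
  have hctop : c ≠ ∞ :=
    ENNReal.mul_ne_top (ENNReal.natCast_ne_top _) (ENNReal.inv_ne_top.mpr hn0)
  have hcreal : c.toReal = 1 - 1/(n:ℝ) := by
    rw [hc, ENNReal.toReal_mul, ENNReal.toReal_inv, ENNReal.toReal_natCast,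
      ENNReal.toReal_natCast, Nat.cast_sub hn1]
    push_cast
    field_simp
  constructor
  · intro x hval
    have key := step_exp_le n x hval h3
    have hEq : expVal (step n x) (fun y => (count n s y : ℝ) * (count n ℓ y : ℝ))
        = (∑' y, step n x y * Fw n s ℓ y).toReal := by
      rw [expVal,
        ENNReal.tsum_toReal_eq (fun y => ENNReal.mul_ne_top (PMF.apply_ne_top _ _) Fw_ne_top)]
      refine tsum_congr fun y => ?_
      rw [ENNReal.toReal_mul, Fw_toReal]
    rw [hEq]
    have hmono := ENNReal.toReal_mono (ENNReal.mul_ne_top hctop Fw_ne_top) key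
    rw [ENNReal.toReal_mul, hcreal, Fw_toReal] at hmono
    exact hmono
  · have h0 : ∀ v, s ≤ x0 v ∧ x0 v ≤ ℓ := fun v => ⟨hs.2 ⟨v, rfl⟩, hℓ.2 ⟨v, rfl⟩⟩
    obtain ⟨v, hv⟩ := hs.1
    obtain ⟨w, hw⟩ := hℓ.1
    have hvw : v ≠ w := by
      intro h; rw [h, hw] at hv; omega
    have hn2 : 2 ≤ n := by
      have h1 : 1 < Fintype.card (Fin n) := Fintype.one_lt_card_iff_nontrivial.mpr ⟨⟨v, w, hvw⟩⟩
      simp at h1; omega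
    set T : ℕ := ⌈3 * (n:ℝ) * Real.log n⌉₊ with hT
    have hmono : ∑' y, Set.indicator {y | 0 < count n s y * count n ℓ y} (dist n x0 T) y
        ≤ ∑' y, dist n x0 T y * Fw n s ℓ y := by
      refine ENNReal.tsum_le_tsum fun y => ?_
      by_cases hy : y ∈ {y | 0 < count n s y * count n ℓ y}
      · rw [Set.indicator_of_mem hy]
        have h1 : (1:ℝ≥0∞) ≤ Fw n s ℓ y := by
          have : 1 ≤ count n s y * count n ℓ y := hy
          simp only [Fw]
          exact_mod_cast this
        calc dist n x0 T y = dist n x0 T y * 1 := (mul_one _).symm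
          _ ≤ _ := mul_le_mul_right h1 _
      · rw [Set.indicator_of_notMem hy]; exact zero_le
    have hE := dist_exp_le n x0 h0 h3 T
    have hbound := hmono.trans hE
    have hnetop : c ^ T * Fw n s ℓ x0 ≠ ∞ :=
      ENNReal.mul_ne_top (ENNReal.pow_ne_top hctop) Fw_ne_top
    rw [prob]
    refine le_trans (ENNReal.toReal_mono hnetop hbound) ?_
    rw [ENNReal.toReal_mul, ENNReal.toReal_pow, hcreal, Fw_toReal]
    have hr0 : (0:ℝ) ≤ 1 - 1/n := by
      rw [sub_nonneg, div_le_one hnR]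
      exact_mod_cast hn1
    have hab : (count n s x0 : ℝ) * (count n ℓ x0 : ℝ) ≤ (n:ℝ) * n := by
      have h1 := count_le n s x0
      have h2 := count_le n ℓ x0
      have h1' : (count n s x0 : ℝ) ≤ n := by exact_mod_cast h1
      have h2' : (count n ℓ x0 : ℝ) ≤ n := by exact_mod_cast h2
      exact mul_le_mul h1' h2' (by positivity) (le_of_lt hnR)
    calc (1 - 1/(n:ℝ)) ^ T * ((count n s x0 : ℝ) * (count n ℓ x0 : ℝ))
        ≤ (1 - 1/(n:ℝ)) ^ T * ((n:ℝ) * n) :=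
          mul_le_mul_of_nonneg_left hab (pow_nonneg hr0 _)
      _ ≤ 1/n := real_tail n hn2


end KnAsync14
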